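/- Let ψ(x,y) be a bispectral meromorphic function on U × V, i.e., there is a nonzero operator in F_y(ψ) acting as multiplication by a nonconstant function g(y). If 𝔟 is a differential operator in y with meromorphic coefficients on V such that 𝔟 · ψ(x,y) = 0, then 𝔟 = 0. -/

import Mathlib

open Filter Topology Set

private lemma iterated_analytic {S : Set ℂ} {f : ℂ → ℂ} (hf : AnalyticOnNhd ℂ f S) (k : ℕ) :
    AnalyticOnNhd ℂ (iteratedDeriv k f) S := by
  rw [iteratedDeriv_eq_iterate]; exact hf.iterated_deriv k

private lemma itd_add {S : Set ℂ} (hS : IsOpen S) {f g : ℂ → ℂ}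
    (hf : AnalyticOnNhd ℂ f S) (hg : AnalyticOnNhd ℂ g S) (k : ℕ) :
    ∀ y ∈ S, iteratedDeriv k (fun z => f z + g z) y
      = iteratedDeriv k f y + iteratedDeriv k g y := by
  induction k with
  | zero => intro y _; simp
  | succ k ih =>
    intro y hy
    have hev : iteratedDeriv k (fun z => f z + g z)
        =ᶠ[𝓝 y] fun z => iteratedDeriv k f z + iteratedDeriv k g z := by
      filter_upwards [hS.mem_nhds hy] with z hz using ih z hz
    rw [iteratedDeriv_succ, hev.deriv_eq,
      deriv_fun_add ((iterated_analytic hf k y hy).differentiableAt)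
        ((iterated_analytic hg k y hy).differentiableAt),
      ← iteratedDeriv_succ, ← iteratedDeriv_succ]

private lemma itd_smul {S : Set ℂ} (hS : IsOpen S) {f : ℂ → ℂ} (c : ℂ)
    (hf : AnalyticOnNhd ℂ f S) (k : ℕ) :
    ∀ y ∈ S, iteratedDeriv k (fun z => c * f z) y = c * iteratedDeriv k f y := by
  induction k with
  | zero => intro y _; simp
  | succ k ih =>
    intro y hy
    have hev : iteratedDeriv k (fun z => c * f z) =ᶠ[𝓝 y] fun z => c * iteratedDeriv k f z := by
      filter_upwards [hS.mem_nhds hy] with z hz using ih z hz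
    rw [iteratedDeriv_succ, hev.deriv_eq,
      deriv_const_mul c ((iterated_analytic hf k y hy).differentiableAt), ← iteratedDeriv_succ]

private lemma eventually_zero_of_derivs_zero {f : ℂ → ℂ} {y₀ : ℂ}
    (hf : AnalyticAt ℂ f y₀) (h : ∀ n, iteratedDeriv n f y₀ = 0) :
    f =ᶠ[𝓝 y₀] 0 := by
  obtain ⟨p, hp⟩ := hf
  have hp0 : p = 0 := by
    ext n : 1
    have h1 : p.coeff n = 0 := by
      obtain ⟨r, hr⟩ := hp
      have h2 := hr.factorial_smul (1 : ℂ) n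
      rw [← iteratedDeriv_eq_iteratedFDeriv, h n] at h2
      have h3 : ((n.factorial : ℕ) : ℂ) * (p n fun _ => 1) = 0 := by
        rw [← nsmul_eq_mul]; exact h2
      have h4 : (p n fun _ => 1) = 0 :=
        (mul_eq_zero.mp h3).resolve_left (by exact_mod_cast Nat.factorial_ne_zero n)
      exact h4
    exact FormalMultilinearSeries.coeff_eq_zero.mp h1
  rw [hp0] at hp
  exact hp.eventually_eq_zero


private lemma ode_eventually_zero {S : Set ℂ} (hS : IsOpen S) {y₀ : ℂ} (hy₀ : y₀ ∈ S)
    {r : ℕ} {B : ℕ → ℂ → ℂ} (hB : ∀ k, AnalyticOnNhd ℂ (B k) S)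
    (hBr : ∀ y ∈ S, B r y ≠ 0)
    {f : ℂ → ℂ} (hfa : AnalyticOnNhd ℂ f S)
    (hode : ∀ y ∈ S, (∑ k ∈ Finset.range (r + 1), B k y * iteratedDeriv k f y) = 0)
    (hjet : ∀ k < r, iteratedDeriv k f y₀ = 0) :
    f =ᶠ[𝓝 y₀] 0 := by
  rcases Nat.eq_zero_or_pos r with hr0 | hrpos
  · subst hr0
    filter_upwards [hS.mem_nhds hy₀] with y hy
    have h1 := hode y hy
    simp only [zero_add, Finset.sum_range_one, iteratedDeriv_zero] at h1
    exact (mul_eq_zero.mp h1).resolve_left (hBr y hy)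
  · -- r ≥ 1
    obtain ⟨s, rfl⟩ : ∃ s, r = s + 1 := ⟨r - 1, (Nat.succ_pred_eq_of_pos hrpos).symm⟩
    set r := s + 1
    set Q : ℕ → ℂ → ℂ := fun k y => -B k y / B r y with hQdef
    have hQa : ∀ k, AnalyticOnNhd ℂ (Q k) S := fun k => ((hB k).neg).div (hB r) hBr
    have hD : ∀ k, AnalyticOnNhd ℂ (iteratedDeriv k f) S := fun k => iterated_analytic hfa k
    have htop : ∀ y ∈ S, iteratedDeriv r f y
        = ∑ k ∈ Finset.range r, Q k y * iteratedDeriv k f y := by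
      intro y hy
      have h1 := hode y hy
      rw [Finset.sum_range_succ] at h1
      have hB0 := hBr y hy
      have h2 : iteratedDeriv r f y
          = (B r y)⁻¹ * (-∑ k ∈ Finset.range r, B k y * iteratedDeriv k f y) := by
        field_simp
        linear_combination h1
      rw [h2, ← Finset.sum_neg_distrib, Finset.mul_sum]
      refine Finset.sum_congr rfl fun k _ => ?_
      simp only [hQdef, div_eq_mul_inv]; ring
    have key : ∀ n : ℕ, ∃ a : ℕ → ℂ → ℂ, (∀ k, AnalyticOnNhd ℂ (a k) S) ∧
        ∀ y ∈ S, iteratedDeriv n f y = ∑ k ∈ Finset.range r, a k y * iteratedDeriv k f y := by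
      intro n
      induction n with
      | zero =>
        refine ⟨fun k y => if k = 0 then 1 else 0, ?_, ?_⟩
        · intro k; by_cases hk : k = 0 <;> simp [hk, analyticOnNhd_const]
        · intro y hy
          rw [Finset.sum_eq_single_of_mem 0 (Finset.mem_range.mpr hrpos)
            (fun k _ hk => by simp [hk])]
          simp
      | succ n ih =>
        obtain ⟨a, ha, hrep⟩ := ih
        refine ⟨fun k y => deriv (a k) y + (if k = 0 then 0 else a (k - 1) y) + a s y * Q k y,
          ?_, ?_⟩
        · intro k
          refine (((ha k).deriv).add ?_).add ((ha s).mul (hQa k))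
          by_cases hk : k = 0 <;> simp [hk, analyticOnNhd_const, ha]
        · intro y hy
          have hev : iteratedDeriv n f
              =ᶠ[𝓝 y] fun z => ∑ k ∈ Finset.range r, a k z * iteratedDeriv k f z := by
            filter_upwards [hS.mem_nhds hy] with z hz using hrep z hz
          have hdiff : ∀ k ∈ Finset.range r,
              DifferentiableAt ℂ (fun z => a k z * iteratedDeriv k f z) y :=
            fun k _ => ((ha k y hy).differentiableAt).mul ((hD k y hy).differentiableAt)
          rw [iteratedDeriv_succ, hev.deriv_eq, deriv_fun_sum hdiff]
          have hterm : ∀ k ∈ Finset.range r,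
              deriv (fun z => a k z * iteratedDeriv k f z) y
              = deriv (a k) y * iteratedDeriv k f y + a k y * iteratedDeriv (k + 1) f y := by
            intro k _
            rw [deriv_fun_mul ((ha k y hy).differentiableAt) ((hD k y hy).differentiableAt),
              ← iteratedDeriv_succ]
          rw [Finset.sum_congr rfl hterm, Finset.sum_add_distrib]
          -- second sum manipulation
          have h2 : ∑ k ∈ Finset.range r, a k y * iteratedDeriv (k + 1) f y
              = (∑ k ∈ Finset.range s, a k y * iteratedDeriv (k + 1) f y)
                + a s y * iteratedDeriv r f y := Finset.sum_range_succ _ s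
          have h3 : ∑ k ∈ Finset.range r, (if k = 0 then 0 else a (k - 1) y)
                * iteratedDeriv k f y
              = ∑ k ∈ Finset.range s, a k y * iteratedDeriv (k + 1) f y := by
            rw [Finset.sum_range_succ']
            simp
          rw [h2, htop y hy, Finset.mul_sum]
          rw [Finset.sum_congr rfl (fun k _ => by ring :
            ∀ k ∈ Finset.range r, (deriv (a k) y + (if k = 0 then 0 else a (k - 1) y)
              + a s y * Q k y) * iteratedDeriv k f y
              = deriv (a k) y * iteratedDeriv k f y
                + (if k = 0 then 0 else a (k - 1) y) * iteratedDeriv k f y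
                + a s y * (Q k y * iteratedDeriv k f y))]
          rw [Finset.sum_add_distrib, Finset.sum_add_distrib, h3]
          ring
    have hder : ∀ n, iteratedDeriv n f y₀ = 0 := by
      intro n
      obtain ⟨a, _, hrep⟩ := key n
      rw [hrep y₀ hy₀]
      refine Finset.sum_eq_zero fun k hk => ?_
      rw [hjet k (Finset.mem_range.mp hk), mul_zero]
    exact eventually_zero_of_derivs_zero (hfa y₀ hy₀) hder


private lemma itd_zero_fun (k : ℕ) : iteratedDeriv k (fun _ : ℂ => (0 : ℂ)) = fun _ => 0 := by
  induction k with
  | zero => simp [iteratedDeriv_zero]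
  | succ k ih => rw [iteratedDeriv_succ, ih]; funext y; simp

open scoped Classical in
/-- multiplication-by-`g` cut off to `V`, as a linear map. -/
private noncomputable def mulOp (V : Set ℂ) (g : ℂ → ℂ) : (ℂ → ℂ) →ₗ[ℂ] (ℂ → ℂ) where
  toFun f := fun y => if y ∈ V then g y * f y else 0
  map_add' f₁ f₂ := by
    funext y; by_cases hy : y ∈ V <;> simp [hy, mul_add]
  map_smul' a f := by
    funext y; by_cases hy : y ∈ V <;> simp [hy]; ring

open scoped Classical in
@[simp] private lemma mulOp_apply (V : Set ℂ) (g : ℂ → ℂ) (f : ℂ → ℂ) (y : ℂ) :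
    mulOp V g f y = if y ∈ V then g y * f y else 0 := rfl

/-- Let `ψ(x,y)` be a nonconstant bispectral meromorphic function on the connected open
set `U × V`: there is a differential operator in `x` with `𝔡·ψ = g(y)ψ` for a nonconstant
meromorphic `g`. If `𝔟 = ∑_{k ≤ m} b_k(y) ∂_y^k` is a differential operator in `y` with
meromorphic (analytic on `V`) coefficients such that `𝔟·ψ = 0`, then `𝔟 = 0`. -/
theorem bispectral_right_operator_faithful
    (U V : Set ℂ) (hUo : IsOpen U) (hVo : IsOpen V)
    (hUc : IsConnected U) (hVc : IsConnected V)
    (ψ : ℂ → ℂ → ℂ)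
    (hψy : ∀ x ∈ U, ∀ y ∈ V, AnalyticAt ℂ (ψ x) y)
    (hψx : ∀ x ∈ U, ∀ y ∈ V, AnalyticAt ℂ (fun t => ψ t y) x)
    (hψnc : ∃ x₁ ∈ U, ∃ y₁ ∈ V, ∃ x₂ ∈ U, ∃ y₂ ∈ V, ψ x₁ y₁ ≠ ψ x₂ y₂)
    (n : ℕ) (c : ℕ → ℂ → ℂ) (g : ℂ → ℂ)
    (hgan : ∀ y ∈ V, AnalyticAt ℂ g y)
    (hgnc : ∃ y₁ ∈ V, ∃ y₂ ∈ V, g y₁ ≠ g y₂)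
    (heig : ∀ x ∈ U, ∀ y ∈ V,
      (∑ j ∈ Finset.range (n + 1), c j x * iteratedDeriv j (fun t => ψ t y) x) = g y * ψ x y)
    (m : ℕ) (b : ℕ → ℂ → ℂ)
    (hban : ∀ k, ∀ y ∈ V, AnalyticAt ℂ (b k) y)
    (hker : ∀ x ∈ U, ∀ y ∈ V,
      (∑ k ∈ Finset.range (m + 1), b k y * iteratedDeriv k (ψ x) y) = 0) :
    ∀ k ≤ m, ∀ y ∈ V, b k y = 0 := by
  classical
  by_contra hcon
  push_neg at hcon
  obtain ⟨k₀, hk₀m, y₀', hy₀'V, hb₀⟩ := hcon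
  set P : ℕ → Prop := fun k => ∃ y ∈ V, b k y ≠ 0 with hPdef
  set r : ℕ := Nat.findGreatest P m with hrdef
  have hPr : P r := Nat.findGreatest_spec hk₀m ⟨y₀', hy₀'V, hb₀⟩
  have hrm : r ≤ m := Nat.findGreatest_le m
  have hhigh : ∀ k, r < k → k ≤ m → ∀ y ∈ V, b k y = 0 := by
    intro k hk hkm y hy
    by_contra hne
    exact (Nat.findGreatest_is_greatest hk hkm) ⟨y, hy, hne⟩
  obtain ⟨y₀, hy₀V, hbry₀⟩ := hPr
  -- the open set where the leading coefficient does not vanish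
  set S : Set ℂ := {y | y ∈ V ∧ b r y ≠ 0} with hSdef
  have hSV : S ⊆ V := fun y hy => hy.1
  have hy₀S : y₀ ∈ S := ⟨hy₀V, hbry₀⟩
  have hSo : IsOpen S := by
    rw [isOpen_iff_mem_nhds]
    rintro y ⟨hyV, hyb⟩
    filter_upwards [hVo.mem_nhds hyV, ((hban r y hyV).continuousAt).eventually_ne hyb]
      with z h1 h2
    exact ⟨h1, h2⟩
  -- the cut-off wave function and the span of its x-slices
  set u : ℂ → ℂ → ℂ := fun x y => if y ∈ V then ψ x y else 0 with hudef
  set W : Submodule ℂ (ℂ → ℂ) := Submodule.span ℂ (u '' U) with hWdef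
  have huW : ∀ x ∈ U, u x ∈ W := fun x hx => Submodule.subset_span ⟨x, hx, rfl⟩
  -- basic properties of all elements of W
  have hWprop : ∀ f ∈ W, (∀ y, y ∉ V → f y = 0) ∧ AnalyticOnNhd ℂ f V ∧
      ∀ y ∈ V, (∑ k ∈ Finset.range (m + 1), b k y * iteratedDeriv k f y) = 0 := by
    intro f hf
    induction hf using Submodule.span_induction with
    | mem f' hf' =>
      obtain ⟨x₀, hx₀, rfl⟩ := hf'
      have hEq : ∀ y ∈ V, u x₀ =ᶠ[𝓝 y] ψ x₀ := by
        intro y hy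
        filter_upwards [hVo.mem_nhds hy] with z hz
        simp [hudef, hz]
      refine ⟨fun y hy => by simp [hudef, hy], ?_, ?_⟩
      · intro y hy
        exact (hψy x₀ hx₀ y hy).congr (hEq y hy).symm
      · intro y hy
        calc ∑ k ∈ Finset.range (m + 1), b k y * iteratedDeriv k (u x₀) y
            = ∑ k ∈ Finset.range (m + 1), b k y * iteratedDeriv k (ψ x₀) y := by
              refine Finset.sum_congr rfl fun k _ => ?_
              rw [(hEq y hy).iteratedDeriv_eq k]
          _ = 0 := hker x₀ hx₀ y hy
    | zero =>
      refine ⟨fun y _ => rfl, fun y _ => analyticAt_const, ?_⟩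
      intro y hy
      refine Finset.sum_eq_zero fun k _ => ?_
      have : iteratedDeriv k (0 : ℂ → ℂ) y = 0 := by
        have := congrFun (itd_zero_fun k) y
        simpa [Pi.zero_def] using this
      rw [this, mul_zero]
    | add f₁ f₂ h₁ h₂ ih₁ ih₂ =>
      obtain ⟨o₁, a₁, e₁⟩ := ih₁
      obtain ⟨o₂, a₂, e₂⟩ := ih₂
      refine ⟨fun y hy => by simp [o₁ y hy, o₂ y hy], fun y hy => (a₁ y hy).add (a₂ y hy), ?_⟩
      intro y hy
      have hsum : ∀ k, iteratedDeriv k (f₁ + f₂) y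
          = iteratedDeriv k f₁ y + iteratedDeriv k f₂ y := by
        intro k
        have := itd_add hVo a₁ a₂ k y hy
        simpa [Pi.add_def] using this
      calc ∑ k ∈ Finset.range (m + 1), b k y * iteratedDeriv k (f₁ + f₂) y
          = (∑ k ∈ Finset.range (m + 1), b k y * iteratedDeriv k f₁ y)
            + ∑ k ∈ Finset.range (m + 1), b k y * iteratedDeriv k f₂ y := by
            rw [← Finset.sum_add_distrib]
            exact Finset.sum_congr rfl fun k _ => by rw [hsum k]; ring
        _ = 0 := by rw [e₁ y hy, e₂ y hy, add_zero]
    | smul a f₁ h₁ ih =>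
      obtain ⟨o₁, a₁, e₁⟩ := ih
      refine ⟨fun y hy => by simp [Pi.smul_apply, o₁ y hy],
        fun y hy => by exact ((analyticAt_const (v := a)).mul (a₁ y hy) : AnalyticAt ℂ (fun i => a * f₁ i) y), ?_⟩
      intro y hy
      have hsm : ∀ k, iteratedDeriv k (a • f₁) y = a * iteratedDeriv k f₁ y := by
        intro k
        have := itd_smul hVo a a₁ k y hy
        simpa [Pi.smul_def, smul_eq_mul] using this
      calc ∑ k ∈ Finset.range (m + 1), b k y * iteratedDeriv k (a • f₁) y
          = a * ∑ k ∈ Finset.range (m + 1), b k y * iteratedDeriv k f₁ y := by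
            rw [Finset.mul_sum]
            exact Finset.sum_congr rfl fun k _ => by rw [hsm k]; ring
        _ = 0 := by rw [e₁ y hy, mul_zero]
  -- the reduced ODE on S
  have hWodeS : ∀ f ∈ W, ∀ y ∈ S,
      (∑ k ∈ Finset.range (r + 1), b k y * iteratedDeriv k f y) = 0 := by
    intro f hf y hyS
    obtain ⟨-, -, hode⟩ := hWprop f hf
    have h2 : ∑ k ∈ Finset.range (r + 1), b k y * iteratedDeriv k f y
        = ∑ k ∈ Finset.range (m + 1), b k y * iteratedDeriv k f y := by
      refine Finset.sum_subset (Finset.range_subset_range.mpr (by omega)) fun k hk hk' => ?_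
      have hkr : r < k := by
        have := Finset.mem_range.not.mp hk'
        omega
      rw [hhigh k hkr (Nat.lt_succ_iff.mp (Finset.mem_range.mp hk)) y (hSV hyS), zero_mul]
    rw [h2]
    exact hode y (hSV hyS)
  -- vanishing of jets forces vanishing
  have hWzero : ∀ f ∈ W, (∀ i < r, iteratedDeriv i f y₀ = 0) → f = 0 := by
    intro f hfW hjet
    obtain ⟨hoff, hanV, -⟩ := hWprop f hfW
    have hev : f =ᶠ[𝓝 y₀] 0 :=
      ode_eventually_zero hSo hy₀S (fun k y hy => hban k y (hSV hy))
        (fun y hy => hy.2) (fun y hy => hanV y (hSV hy)) (hWodeS f hfW) hjet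
    have hEq : Set.EqOn f 0 V :=
      hanV.eqOn_zero_of_preconnected_of_eventuallyEq_zero hVc.isPreconnected hy₀V hev
    funext y
    by_cases hy : y ∈ V
    · exact hEq hy
    · exact hoff y hy
  -- the jet map and finite-dimensionality
  set J : W →ₗ[ℂ] (Fin r → ℂ) :=
    { toFun := fun f i => iteratedDeriv i f.1 y₀
      map_add' := by
        rintro ⟨f, hf⟩ ⟨f', hf'⟩
        funext i
        have := itd_add hVo (hWprop f hf).2.1 (hWprop f' hf').2.1 i y₀ hy₀V
        simpa [Pi.add_def] using this
      map_smul' := by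
        rintro a ⟨f, hf⟩
        funext i
        have := itd_smul hVo a (hWprop f hf).2.1 i y₀ hy₀V
        simpa [Pi.smul_def, smul_eq_mul] using this } with hJdef
  have hJker : ∀ f : W, J f = 0 → f = 0 := by
    rintro ⟨f, hf⟩ hJf
    have hjet : ∀ i < r, iteratedDeriv i f y₀ = 0 := by
      intro i hi
      have := congrFun hJf ⟨i, hi⟩
      simpa [hJdef] using this
    exact Subtype.ext (hWzero f hf hjet)
  have hJinj : Function.Injective J := by
    intro f f' h
    have h0 : J (f - f') = 0 := by rw [map_sub, h, sub_self]
    exact sub_eq_zero.mp (hJker _ h0)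
  have hWfin : FiniteDimensional ℂ W := FiniteDimensional.of_injective J hJinj
  -- the x-derivatives of the wave function stay in W
  set v : ℕ → ℂ → ℂ → ℂ :=
    fun j x y => if y ∈ V then iteratedDeriv j (fun t => ψ t y) x else 0 with hvdef
  have hvW : ∀ j, ∀ x ∈ U, v j x ∈ W := by
    intro j
    induction j with
    | zero =>
      intro x hx
      have huv : v 0 x = u x := by
        funext y; by_cases hy : y ∈ V <;> simp [hvdef, hudef, hy]
      rw [huv]
      exact huW x hx
    | succ j ih =>
      intro x hx
      have hWc : IsClosed (W : Set (ℂ → ℂ)) := Submodule.closed_of_finiteDimensional W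
      have hev : ∀ᶠ t in 𝓝[≠] x, (t - x)⁻¹ • (v j t - v j x) ∈ (W : Set (ℂ → ℂ)) := by
        filter_upwards [nhdsWithin_le_nhds (hUo.mem_nhds hx)] with t ht
        exact W.smul_mem _ (W.sub_mem (ih t ht) (ih x hx))
      have htend : Tendsto (fun t => (t - x)⁻¹ • (v j t - v j x)) (𝓝[≠] x)
          (𝓝 (v (j + 1) x)) := by
        rw [tendsto_pi_nhds]
        intro y
        by_cases hy : y ∈ V
        · have hA : AnalyticOnNhd ℂ (fun t => ψ t y) U := fun t ht => hψx t ht y hy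
          have hAj : AnalyticOnNhd ℂ (iteratedDeriv j (fun t => ψ t y)) U :=
            iterated_analytic hA j
          have hd : HasDerivAt (iteratedDeriv j (fun t => ψ t y))
              (iteratedDeriv (j + 1) (fun t => ψ t y) x) x := by
            rw [iteratedDeriv_succ]
            exact ((hAj x hx).differentiableAt).hasDerivAt
          have hslope := hasDerivAt_iff_tendsto_slope.mp hd
          have heq : (fun t => ((t - x)⁻¹ • (v j t - v j x)) y)
              =ᶠ[𝓝[≠] x] slope (iteratedDeriv j (fun t => ψ t y)) x := by
            filter_upwards [eventually_mem_nhdsWithin] with t ht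
            rw [slope_def_field]
            simp only [hvdef, Pi.smul_apply, Pi.sub_apply, smul_eq_mul, if_pos hy]
            rw [div_eq_inv_mul]
          rw [show v (j + 1) x y = iteratedDeriv (j + 1) (fun t => ψ t y) x from if_pos hy]
          exact (hslope.congr' heq.symm)
        · have hzz : (fun t => ((t - x)⁻¹ • (v j t - v j x)) y) = fun _ => 0 := by
            funext t; simp [hvdef, hy]
          rw [hzz, show v (j + 1) x y = 0 from if_neg hy]
          exact tendsto_const_nhds
      exact hWc.mem_of_tendsto htend hev
  -- the multiplication operator maps W to itself
  set T : (ℂ → ℂ) →ₗ[ℂ] (ℂ → ℂ) := mulOp V g with hTdef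
  have hTgen : ∀ x ∈ U, T (u x) = ∑ j ∈ Finset.range (n + 1), c j x • v j x := by
    intro x hx
    funext y
    by_cases hy : y ∈ V
    · have h1 : T (u x) y = g y * ψ x y := by simp [hTdef, hudef, hy]
      have h2 : (∑ j ∈ Finset.range (n + 1), c j x • v j x) y
          = ∑ j ∈ Finset.range (n + 1), c j x * iteratedDeriv j (fun t => ψ t y) x := by
        rw [Finset.sum_apply]
        exact Finset.sum_congr rfl fun j _ => by simp [hvdef, hy]
      rw [h1, h2, heig x hx y hy]
    · have h1 : T (u x) y = 0 := by simp [hTdef, hy]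
      have h2 : (∑ j ∈ Finset.range (n + 1), c j x • v j x) y = 0 := by
        rw [Finset.sum_apply]
        exact Finset.sum_eq_zero fun j _ => by simp [hvdef, hy]
      rw [h1, h2]
  have hTW : ∀ f ∈ W, T f ∈ W := by
    intro f hf
    induction hf using Submodule.span_induction with
    | mem f' hf' =>
      obtain ⟨x, hx, rfl⟩ := hf'
      rw [hTgen x hx]
      exact Submodule.sum_mem _ fun j _ => W.smul_mem _ (hvW j x hx)
    | zero => rw [map_zero]; exact W.zero_mem
    | add f₁ f₂ h₁ h₂ ih₁ ih₂ => rw [map_add]; exact W.add_mem ih₁ ih₂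
    | smul a f₁ h₁ ih => rw [map_smul]; exact W.smul_mem _ ih
  set T' : Module.End ℂ W := T.restrict hTW with hT'def
  -- W is nontrivial
  obtain ⟨x₁, hx₁, y₁, hy₁, x₂, hx₂, y₂, hy₂, hne⟩ := hψnc
  have hxs : ∃ x ∈ U, ∃ y ∈ V, ψ x y ≠ 0 := by
    by_cases h1 : ψ x₁ y₁ = 0
    · refine ⟨x₂, hx₂, y₂, hy₂, fun h2 => hne ?_⟩
      rw [h1, h2]
    · exact ⟨x₁, hx₁, y₁, hy₁, h1⟩
  obtain ⟨xs, hxsU, ys, hysV, hψs⟩ := hxs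
  have hNT : Nontrivial W := by
    refine ⟨⟨u xs, huW xs hxsU⟩, 0, fun hcontr => ?_⟩
    have h1 : u xs = 0 := congrArg Subtype.val hcontr
    have h2 := congrFun h1 ys
    simp [hudef, hysV] at h2
    exact hψs h2
  -- extract an eigenvalue of multiplication by g
  obtain ⟨μ, hμ⟩ := Module.End.exists_eigenvalue T'
  obtain ⟨fv, hfv⟩ := hμ.exists_hasEigenvector
  have hfeq : ∀ y ∈ V, g y * fv.1 y = μ * fv.1 y := by
    have h1 : T fv.1 = μ • fv.1 := by
      have h0 := Module.End.mem_eigenspace_iff.mp hfv.1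
      have h2 := congrArg Subtype.val h0
      rw [hT'def, LinearMap.restrict_apply] at h2
      exact h2
    intro y hy
    have h3 := congrFun h1 y
    simpa [hTdef, hy] using h3
  have hfv1ne : fv.1 ≠ 0 := fun h => hfv.2 (Subtype.ext h)
  obtain ⟨yst, hyst⟩ := Function.ne_iff.mp hfv1ne
  obtain ⟨hoff, hanV, -⟩ := hWprop fv.1 fv.2
  have hystV : yst ∈ V := by
    by_contra h
    exact hyst (hoff yst h)
  have hevg : g =ᶠ[𝓝 yst] fun _ => μ := by
    filter_upwards [hVo.mem_nhds hystV,
      ((hanV yst hystV).continuousAt).eventually_ne hyst] with z hz1 hz2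
    exact mul_right_cancel₀ hz2 (hfeq z hz1)
  have hgEq : Set.EqOn g (fun _ => μ) V :=
    AnalyticOnNhd.eqOn_of_preconnected_of_eventuallyEq (fun y hy => hgan y hy)
      analyticOnNhd_const hVc.isPreconnected hystV hevg
  obtain ⟨z₁, hz₁, z₂, hz₂, hgne⟩ := hgnc
  exact hgne (by rw [hgEq hz₁, hgEq hz₂])
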